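/- arXiv:2010.14050 — 9 statements merged into one kernel-verified Lean document; each statement's English description precedes it below -/
import Mathlib

section
/- Let N ≥ 1 and let A be a real N×N matrix with A_{ii} ≠ 0 for every i. Assume A is irreducible (for every pair of indices i ≠ j there exist indices i = i₀, i₁, …, i_r = j with A_{i_s, i_{s+1}} ≠ 0 for all s), that ∑_{j≠i} |A_{ij}| ≤ |A_{ii}| for every row i, and that this inequality is strict for at least one row i. Then the spectral radius of the Jacobi iteration matrix I − D⁻¹A (where D is the diagonal part of A) is strictly less than 1; consequently A is invertible and, for every b ∈ ℝ^N and every initial vector U⁰, the Jacobi iterates U^m = (I − D⁻¹A)U^{m−1} + D⁻¹b converge to the unique solution of AU = b. -/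
open Filter Topology Matrix
open scoped NNReal ENNReal

lemma scar_eig (N : ℕ) (hN : 1 ≤ N) (A : Matrix (Fin N) (Fin N) ℝ)
    (hdiag : ∀ i, A i i ≠ 0)
    (hirr : ∀ i j : Fin N, i ≠ j → ∃ r : ℕ, ∃ c : ℕ → Fin N,
      c 0 = i ∧ c r = j ∧ ∀ s < r, A (c s) (c (s + 1)) ≠ 0)
    (hrow : ∀ i, ∑ j ∈ Finset.univ.erase i, |A i j| ≤ |A i i|)
    (hstrict : ∃ i, ∑ j ∈ Finset.univ.erase i, |A i j| < |A i i|)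
    (μ : ℂ)
    (hμ : μ ∈ spectrum ℂ ((((1 : Matrix (Fin N) (Fin N) ℝ)
          - (Matrix.diagonal fun i => (A i i)⁻¹) * A)).map Complex.ofReal)) :
    ‖μ‖ < 1 := by
  haveI : Nonempty (Fin N) := ⟨⟨0, hN⟩⟩
  set B : Matrix (Fin N) (Fin N) ℝ :=
    (1 : Matrix (Fin N) (Fin N) ℝ) - (Matrix.diagonal fun i => (A i i)⁻¹) * A with hBdef
  have hB : ∀ i j, B i j = (if i = j then (1:ℝ) else 0) - (A i i)⁻¹ * A i j := by
    intro i j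
    simp [hBdef, Matrix.sub_apply, Matrix.one_apply, Matrix.diagonal_mul]
  have hBii : ∀ i, B i i = 0 := by
    intro i; rw [hB]; simp [inv_mul_cancel₀ (hdiag i)]
  have hBabs : ∀ i j, j ≠ i → |B i j| = |A i i|⁻¹ * |A i j| := by
    intro i j hji
    rw [hB, if_neg (Ne.symm hji), zero_sub, abs_neg, abs_mul, abs_inv]
  have hrowsum : ∀ i, ∑ j ∈ Finset.univ.erase i, |B i j|
      = |A i i|⁻¹ * ∑ j ∈ Finset.univ.erase i, |A i j| := by
    intro i
    rw [Finset.mul_sum]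
    exact Finset.sum_congr rfl fun j hj => hBabs i j (Finset.ne_of_mem_erase hj)
  have hrowB : ∀ i, ∑ j ∈ Finset.univ.erase i, |B i j| ≤ 1 := by
    intro i
    rw [hrowsum, inv_mul_le_iff₀ (abs_pos.2 (hdiag i)), mul_one]
    exact hrow i
  obtain ⟨i₀, hi₀⟩ := hstrict
  have hstrictB : ∑ j ∈ Finset.univ.erase i₀, |B i₀ j| < 1 := by
    rw [hrowsum]
    rw [inv_mul_lt_iff₀ (abs_pos.2 (hdiag i₀)), mul_one]
    exact hi₀
  -- extract an eigenvector
  set C : Matrix (Fin N) (Fin N) ℂ := B.map Complex.ofReal with hCdef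
  rw [spectrum.mem_iff] at hμ
  have hdet : ((algebraMap ℂ (Matrix (Fin N) (Fin N) ℂ)) μ - C).det = 0 := by
    by_contra h
    exact hμ ((Matrix.isUnit_iff_isUnit_det _).2 (isUnit_iff_ne_zero.2 h))
  obtain ⟨x, hx0, hxeq⟩ := (Matrix.exists_mulVec_eq_zero_iff).2 hdet
  have heig : ∀ i, ∑ j, C i j * x j = μ * x i := by
    intro i
    have := congrFun hxeq i
    simp only [Matrix.sub_mulVec, Pi.sub_apply, Pi.zero_apply, sub_eq_zero] at this
    have halg : ((algebraMap ℂ (Matrix (Fin N) (Fin N) ℂ)) μ) *ᵥ x = μ • x := by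
      rw [Algebra.algebraMap_eq_smul_one, Matrix.smul_mulVec, Matrix.one_mulVec]
    rw [halg] at this
    have := this.symm
    simpa [Matrix.mulVec, dotProduct] using this
  -- the maximum modulus
  set M : ℝ := Finset.univ.sup' Finset.univ_nonempty (fun j => ‖x j‖) with hMdef
  have hle : ∀ j, ‖x j‖ ≤ M := fun j => Finset.le_sup' (fun j => ‖x j‖) (Finset.mem_univ j)
  have hMpos : 0 < M := by
    obtain ⟨j, hj⟩ := Function.ne_iff.1 hx0
    exact lt_of_lt_of_le (norm_pos_iff.2 hj) (hle j)
  obtain ⟨imax, _, hmax⟩ := Finset.exists_mem_eq_sup' Finset.univ_nonempty (fun j => ‖x j‖)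
  by_contra hcon
  push_neg at hcon
  have hCB : ∀ i j, ‖C i j‖ = |B i j| := by
    intro i j
    simp [hCdef, Matrix.map_apply, Complex.norm_real, Real.norm_eq_abs]
  -- key propagation step
  have key : ∀ i, ‖x i‖ = M →
      (∀ j, B i j ≠ 0 → ‖x j‖ = M) ∧
      M ≤ (∑ j ∈ Finset.univ.erase i, |B i j|) * M := by
    intro i hi
    have h0 : M ≤ ‖∑ j, C i j * x j‖ := by
      rw [heig, norm_mul, hi]
      nlinarith [hcon]
    have h1 : ‖∑ j, C i j * x j‖ ≤ ∑ j ∈ Finset.univ.erase i, |B i j| * ‖x j‖ := by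
      refine le_trans (norm_sum_le _ _) ?_
      rw [← Finset.add_sum_erase _ _ (Finset.mem_univ i)]
      have : ‖C i i * x i‖ = 0 := by
        rw [norm_mul, hCB, hBii]; simp
      rw [this, zero_add]
      exact Finset.sum_le_sum fun j _ => by rw [norm_mul, hCB]
    have h2 : ∑ j ∈ Finset.univ.erase i, |B i j| * ‖x j‖
        ≤ ∑ j ∈ Finset.univ.erase i, |B i j| * M :=
      Finset.sum_le_sum fun j _ => mul_le_mul_of_nonneg_left (hle j) (abs_nonneg _)
    have h3 : (∑ j ∈ Finset.univ.erase i, |B i j|) * M ≤ M := by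
      nlinarith [hrowB i, hMpos]
    have h4 : ∑ j ∈ Finset.univ.erase i, |B i j| * M ≤ M := by
      rw [← Finset.sum_mul]; exact h3
    have hsumeq : ∑ j ∈ Finset.univ.erase i, |B i j| * ‖x j‖
        = ∑ j ∈ Finset.univ.erase i, |B i j| * M :=
      le_antisymm h2 (h4.trans (h0.trans h1))
    refine ⟨?_, by rw [Finset.sum_mul]; exact (h0.trans h1).trans (le_of_eq hsumeq)⟩
    have heach := (Finset.sum_eq_sum_iff_of_le (fun j _ =>
      mul_le_mul_of_nonneg_left (hle j) (abs_nonneg _))).1 hsumeq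
    intro j hBj
    rcases eq_or_ne j i with rfl | hji
    · exact hi
    · have hj : j ∈ Finset.univ.erase i := Finset.mem_erase.2 ⟨hji, Finset.mem_univ j⟩
      have := heach j hj
      exact mul_left_cancel₀ (abs_ne_zero.2 hBj) this
  -- propagate the maximum to i₀
  have hmax' : ‖x imax‖ = M := hmax.symm
  have hi₀max : ‖x i₀‖ = M := by
    rcases eq_or_ne imax i₀ with rfl | hne
    · exact hmax'
    · obtain ⟨r, c, hc0, hcr, hchain⟩ := hirr imax i₀ hne
      have : ∀ s, s ≤ r → ‖x (c s)‖ = M := by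
        intro s
        induction s with
        | zero => intro _; rw [hc0]; exact hmax'
        | succ s ih =>
          intro hsr
          have hs : s < r := Nat.lt_of_succ_le hsr
          have ihs := ih (le_of_lt hs)
          rcases eq_or_ne (c (s+1)) (c s) with heq | hneq
          · rw [heq]; exact ihs
          · refine (key (c s) ihs).1 (c (s+1)) ?_
            rw [hB, if_neg (fun h => hneq h.symm), zero_sub]
            simp only [neg_ne_zero]
            exact mul_ne_zero (inv_ne_zero (hdiag _)) (hchain s hs)
      have := this r le_rfl
      rwa [hcr] at this
  -- contradiction with the strict row
  have := (key i₀ hi₀max).2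
  nlinarith [hstrictB, hMpos]


/-- **Scarborough criterion.** If `A` is an irreducible real `N × N` matrix with nonzero
diagonal, weakly diagonally dominant in every row and strictly diagonally dominant in at
least one row, then the spectral radius of the Jacobi iteration matrix `I - D⁻¹A` is
strictly less than 1, `A` is invertible, and for every right-hand side `b` and every
initial vector the Jacobi iterates converge to the unique solution of `A U = b`. -/
theorem scarborough_jacobi_convergence
    (N : ℕ) (hN : 1 ≤ N) (A : Matrix (Fin N) (Fin N) ℝ)
    (hdiag : ∀ i, A i i ≠ 0)
    (hirr : ∀ i j : Fin N, i ≠ j → ∃ r : ℕ, ∃ c : ℕ → Fin N,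
      c 0 = i ∧ c r = j ∧ ∀ s < r, A (c s) (c (s + 1)) ≠ 0)
    (hrow : ∀ i, ∑ j ∈ Finset.univ.erase i, |A i j| ≤ |A i i|)
    (hstrict : ∃ i, ∑ j ∈ Finset.univ.erase i, |A i j| < |A i i|) :
    spectralRadius ℂ
      ((((1 : Matrix (Fin N) (Fin N) ℝ)
          - (Matrix.diagonal fun i => (A i i)⁻¹) * A)).map Complex.ofReal) < 1 ∧
    IsUnit A ∧
    ∀ b : Fin N → ℝ, ∃ Ustar : Fin N → ℝ,
      A.mulVec Ustar = b ∧ (∀ V : Fin N → ℝ, A.mulVec V = b → V = Ustar) ∧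
      ∀ U : ℕ → Fin N → ℝ,
        (∀ m : ℕ, U (m + 1) =
            ((1 : Matrix (Fin N) (Fin N) ℝ)
              - (Matrix.diagonal fun i => (A i i)⁻¹) * A).mulVec (U m)
            + (Matrix.diagonal fun i => (A i i)⁻¹).mulVec b) →
        Filter.Tendsto U Filter.atTop (nhds Ustar) := by
  haveI : Nonempty (Fin N) := ⟨⟨0, hN⟩⟩
  set B : Matrix (Fin N) (Fin N) ℝ :=
    (1 : Matrix (Fin N) (Fin N) ℝ) - (Matrix.diagonal fun i => (A i i)⁻¹) * A with hBdef
  set C : Matrix (Fin N) (Fin N) ℂ := B.map Complex.ofReal with hCdef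
  have heig : ∀ μ ∈ spectrum ℂ C, ‖μ‖ < 1 :=
    fun μ hμ => scar_eig N hN A hdiag hirr hrow hstrict μ hμ
  -- spectral radius bound
  have hρ : spectralRadius ℂ C < 1 := by
    set s := (Matrix.finite_spectrum C).toFinset with hs
    set r : ℝ≥0 := s.sup fun k => ‖k‖₊ with hr
    have hr1 : r < 1 := by
      rw [hr, Finset.sup_lt_iff (show (⊥ : ℝ≥0) < 1 by norm_num)]
      intro k hk
      have := heig k ((Set.Finite.mem_toFinset _).1 hk)
      rw [← NNReal.coe_lt_coe]
      simpa using this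
    have hle : spectralRadius ℂ C ≤ (r : ℝ≥0∞) := by
      refine iSup₂_le fun k hk => ?_
      exact_mod_cast Finset.le_sup (f := fun k => ‖k‖₊) ((Set.Finite.mem_toFinset _).2 hk)
    calc spectralRadius ℂ C ≤ (r : ℝ≥0∞) := hle
      _ < 1 := by exact_mod_cast hr1
  have h1spec : (1 : ℂ) ∉ spectrum ℂ C := by
    intro h
    have := heig 1 h
    simp at this
  have hUnit1C : IsUnit ((1 : Matrix (Fin N) (Fin N) ℂ) - C) := by
    have := spectrum.notMem_iff.1 h1spec
    simpa using this
  have h1C : (1 : Matrix (Fin N) (Fin N) ℂ) - C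
      = ((Matrix.diagonal fun i => (A i i)⁻¹) * A).map Complex.ofReal := by
    ext i j
    by_cases h : i = j <;>
      simp [hCdef, hBdef, Matrix.map_apply, Matrix.sub_apply, Matrix.one_apply, h]
  have hdetDA : ((Matrix.diagonal fun i => (A i i)⁻¹) * A).det ≠ 0 := by
    intro h
    rw [h1C] at hUnit1C
    have := (Matrix.isUnit_iff_isUnit_det _).1 hUnit1C
    rw [isUnit_iff_ne_zero] at this
    apply this
    have hmapdet : (((Matrix.diagonal fun i => (A i i)⁻¹) * A).map Complex.ofReal).det
        = Complex.ofReal (((Matrix.diagonal fun i => (A i i)⁻¹) * A).det) := by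
      exact (RingHom.map_det Complex.ofRealHom _).symm
    rw [hmapdet, h, Complex.ofReal_zero]
  have hdetA : A.det ≠ 0 := by
    intro h
    apply hdetDA
    rw [Matrix.det_mul, h, mul_zero]
  have hAunit : IsUnit A := (Matrix.isUnit_iff_isUnit_det A).2 (isUnit_iff_ne_zero.2 hdetA)
  refine ⟨hρ, hAunit, ?_⟩
  intro b
  have hAdet : IsUnit A.det := isUnit_iff_ne_zero.2 hdetA
  set Ustar : Fin N → ℝ := A⁻¹ *ᵥ b with hUstar
  have hsol : A *ᵥ Ustar = b := by
    rw [hUstar, Matrix.mulVec_mulVec, Matrix.mul_nonsing_inv A hAdet, Matrix.one_mulVec]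
  refine ⟨Ustar, hsol, ?_, ?_⟩
  · intro V hV
    calc V = (A⁻¹ * A) *ᵥ V := by rw [Matrix.nonsing_inv_mul A hAdet, Matrix.one_mulVec]
    _ = A⁻¹ *ᵥ (A *ᵥ V) := (Matrix.mulVec_mulVec V A⁻¹ A).symm
    _ = Ustar := by rw [hV]
  · intro U hU
    set D' : Matrix (Fin N) (Fin N) ℝ := Matrix.diagonal fun i => (A i i)⁻¹ with hD'
    have hfix : B *ᵥ Ustar + D' *ᵥ b = Ustar := by
      rw [hBdef, Matrix.sub_mulVec, Matrix.one_mulVec, ← Matrix.mulVec_mulVec, hsol]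
      abel
    have hiter : ∀ m, U m = (B ^ m) *ᵥ (U 0 - Ustar) + Ustar := by
      intro m
      induction m with
      | zero => simp [Matrix.one_mulVec]
      | succ m ih =>
        rw [hU m, ih, Matrix.mulVec_add, Matrix.mulVec_mulVec, ← pow_succ',
          add_assoc, hfix]
    -- norm estimates via Gelfand's formula
    letI instNR : NormedRing (Matrix (Fin N) (Fin N) ℂ) := Matrix.linftyOpNormedRing
    letI instNA : NormedAlgebra ℂ (Matrix (Fin N) (Fin N) ℂ) := Matrix.linftyOpNormedAlgebra
    haveI : CompleteSpace (Matrix (Fin N) (Fin N) ℂ) := FiniteDimensional.complete ℂ _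
    have hG := spectrum.pow_nnnorm_pow_one_div_tendsto_nhds_spectralRadius C
    obtain ⟨c, hc1, hc2⟩ := exists_between hρ
    have hctop : c ≠ ⊤ := ne_top_of_lt hc2
    set r : ℝ≥0 := c.toNNReal with hrdef
    have hcr : (r : ℝ≥0∞) = c := ENNReal.coe_toNNReal hctop
    have hr1 : r < 1 := by
      rw [← ENNReal.coe_lt_one_iff, hcr]; exact hc2
    have hev : ∀ᶠ n : ℕ in atTop, (‖C ^ n‖₊ : ℝ≥0∞) ^ (1 / (n:ℝ)) < (r:ℝ≥0∞) := by
      apply hG.eventually_lt_const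
      rw [hcr]; exact hc1
    have hbound : ∀ᶠ n : ℕ in atTop, ‖C ^ n‖ ≤ (r:ℝ) ^ n := by
      filter_upwards [hev, eventually_ge_atTop 1] with n hn hn1
      have hne : (n:ℝ) ≠ 0 := Nat.cast_ne_zero.2 (by omega)
      have h1 : ((‖C ^ n‖₊ : ℝ≥0∞) ^ (1/(n:ℝ))) ^ (n:ℝ) ≤ (r:ℝ≥0∞) ^ (n:ℝ) :=
        ENNReal.rpow_le_rpow hn.le (by positivity)
      rw [← ENNReal.rpow_mul, one_div, inv_mul_cancel₀ hne, ENNReal.rpow_one] at h1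
      have h2 : (‖C ^ n‖₊ : ℝ≥0∞) ≤ ((r ^ n : ℝ≥0) : ℝ≥0∞) := by
        rw [ENNReal.coe_pow, ← ENNReal.rpow_natCast]; exact h1
      have h3 : ‖C ^ n‖₊ ≤ r ^ n := ENNReal.coe_le_coe.1 h2
      calc ‖C ^ n‖ = ((‖C ^ n‖₊ : ℝ≥0) : ℝ) := rfl
      _ ≤ ((r ^ n : ℝ≥0) : ℝ) := NNReal.coe_le_coe.2 h3
      _ = (r:ℝ) ^ n := by push_cast; ring
    have hnorm0 : Tendsto (fun n => ‖C ^ n‖) atTop (𝓝 0) :=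
      squeeze_zero' (Eventually.of_forall fun n => norm_nonneg _) hbound
        (tendsto_pow_atTop_nhds_zero_of_lt_one r.coe_nonneg (by exact_mod_cast hr1))
    have hmm : ∀ (M : Matrix (Fin N) (Fin N) ℝ),
        M.map Complex.ofReal = Complex.ofRealHom.mapMatrix M := fun M => rfl
    have hmap : ∀ n : ℕ, C ^ n = (B ^ n).map Complex.ofReal := by
      intro n
      rw [hCdef, hmm, hmm, map_pow]
    have hentry : ∀ (M : Matrix (Fin N) (Fin N) ℂ) (i j : Fin N), ‖M i j‖ ≤ ‖M‖ := by
      intro M i j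
      rw [Matrix.linfty_opNorm_def]
      have h1 : ‖M i j‖₊ ≤ ∑ k, ‖M i k‖₊ :=
        Finset.single_le_sum (f := fun k => ‖M i k‖₊) (fun k _ => zero_le) (Finset.mem_univ j)
      have h2 : (∑ k, ‖M i k‖₊) ≤ Finset.univ.sup fun i => ∑ k, ‖M i k‖₊ :=
        Finset.le_sup (f := fun i => ∑ k, ‖M i k‖₊) (Finset.mem_univ i)
      exact_mod_cast h1.trans h2
    have hBn0 : ∀ i j, Tendsto (fun n => (B ^ n) i j) atTop (𝓝 0) := by
      intro i j
      refine squeeze_zero_norm (fun n => ?_) hnorm0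
      calc ‖(B ^ n) i j‖ = ‖(C ^ n) i j‖ := by
            rw [hmap n, Matrix.map_apply, Complex.norm_real]
      _ ≤ ‖C ^ n‖ := hentry _ i j
    rw [tendsto_pi_nhds]
    intro i
    have hUm : ∀ m, U m i = (∑ j, (B ^ m) i j * (U 0 j - Ustar j)) + Ustar i := by
      intro m
      conv_lhs => rw [hiter m]
      simp [Matrix.mulVec, dotProduct]
    rw [show 𝓝 (Ustar i) = 𝓝 (0 + Ustar i) by rw [zero_add]]
    refine Tendsto.congr (fun m => (hUm m).symm) ?_
    refine Tendsto.add_const _ ?_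
    rw [show (0:ℝ) = ∑ j : Fin N, (0:ℝ) by simp]
    refine tendsto_finset_sum _ fun j _ => ?_
    simpa using (hBn0 i j).mul_const (U 0 j - Ustar j)
end

section
/- Let ε_k, η_k, γ_k ∈ ℝ (k = 1,2) satisfy |η_k| ≤ ε_k and γ_k ≥ 0, and let κ ∈ ℝ satisfy κ ≥ 2ε_k + γ_k for k = 1,2. Then for each k, |ε_k+η_k| + |κ−(2ε_k+γ_k)| + |ε_k−η_k| = κ − γ_k, and consequently max_{k=1,2} (|ε_k+η_k| + |κ−(2ε_k+γ_k)| + |ε_k−η_k|)/(1+κ) = max_{k=1,2} (κ−γ_k)/(1+κ) < 1; in particular the sufficient convergence condition for the artificial compressibility Schwarz iteration is automatically satisfied. -/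
/-- When `|η_k| ≤ ε_k`, `γ_k ≥ 0` and `κ ≥ 2ε_k + γ_k` for `k = 1,2`, the row sums of the
artificial compressibility Schwarz iteration matrix simplify to `κ - γ_k`, and the
sufficient convergence condition is automatically satisfied. -/
theorem artificial_compressibility_condition_automatic
    (ε₁ ε₂ η₁ η₂ γ₁ γ₂ κ : ℝ)
    (hη₁ : |η₁| ≤ ε₁) (hη₂ : |η₂| ≤ ε₂) (hγ₁ : 0 ≤ γ₁) (hγ₂ : 0 ≤ γ₂)
    (hκ₁ : 2 * ε₁ + γ₁ ≤ κ) (hκ₂ : 2 * ε₂ + γ₂ ≤ κ) :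
    (|ε₁ + η₁| + |κ - (2 * ε₁ + γ₁)| + |ε₁ - η₁| = κ - γ₁) ∧
    (|ε₂ + η₂| + |κ - (2 * ε₂ + γ₂)| + |ε₂ - η₂| = κ - γ₂) ∧
    max ((|ε₁ + η₁| + |κ - (2 * ε₁ + γ₁)| + |ε₁ - η₁|) / (1 + κ))
        ((|ε₂ + η₂| + |κ - (2 * ε₂ + γ₂)| + |ε₂ - η₂|) / (1 + κ))
      = max ((κ - γ₁) / (1 + κ)) ((κ - γ₂) / (1 + κ)) ∧
    max ((κ - γ₁) / (1 + κ)) ((κ - γ₂) / (1 + κ)) < 1 := by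
  obtain ⟨h1a, h1b⟩ := abs_le.mp hη₁
  obtain ⟨h2a, h2b⟩ := abs_le.mp hη₂
  have e1 : |ε₁ + η₁| + |κ - (2 * ε₁ + γ₁)| + |ε₁ - η₁| = κ - γ₁ := by
    rw [abs_of_nonneg (by linarith), abs_of_nonneg (by linarith),
      abs_of_nonneg (by linarith)]; ring
  have e2 : |ε₂ + η₂| + |κ - (2 * ε₂ + γ₂)| + |ε₂ - η₂| = κ - γ₂ := by
    rw [abs_of_nonneg (by linarith), abs_of_nonneg (by linarith),
      abs_of_nonneg (by linarith)]; ring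
  have hκ0 : (0:ℝ) < 1 + κ := by
    have : 0 ≤ ε₁ := le_trans (abs_nonneg _) hη₁
    linarith
  refine ⟨e1, e2, by rw [e1, e2], ?_⟩
  have l1 : (κ - γ₁) / (1 + κ) < 1 := (div_lt_one hκ0).mpr (by linarith)
  have l2 : (κ - γ₂) / (1 + κ) < 1 := (div_lt_one hκ0).mpr (by linarith)
  exact max_lt l1 l2
end

section
/- Let I, J ≥ 3 and ε_k, η_k, γ_k ∈ ℝ with s_k := 1+2ε_k+γ_k (k = 1,2). Define R₁(2) = s₁ and R₁(i) = s₁ + (η₁²−ε₁²)/R₁(i−1) for 3 ≤ i ≤ I−1, and R₂(J−1) = s₂ and R₂(j) = s₂ + (η₂²−ε₂²)/R₂(j+1) for 2 ≤ j ≤ J−2; assume R₁(i) ≠ 0 for 2 ≤ i ≤ I−1 and R₂(j) ≠ 0 for 2 ≤ j ≤ J−1. Suppose the error sequences e₁^m ∈ ℝ^I, e₂^m ∈ ℝ^J satisfy, for every m ≥ 1: e₁^m_1 = 0 and e₂^m_J = 0; −(η₁+ε₁)e₁^m_{i−1} + s₁ e₁^m_i + (η₁−ε₁)e₁^m_{i+1}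 = 0 for 2 ≤ i ≤ I−1; −(η₂+ε₂)e₂^m_{j−1} + s₂ e₂^m_j + (η₂−ε₂)e₂^m_{j+1} = 0 for 2 ≤ j ≤ J−1; and the classic (Dirichlet) interface conditions e₁^m_I = e₂^{m−1}_2 and e₂^m_1 = e₁^{m−1}_{I−1}. Then, with ρ̄ := −(η₁−ε₁)(η₂+ε₂)/(R₁(I−1)·R₂(2)), for every m ≥ 1 one has e₁^{m+2}_i = ρ̄·e₁^m_i for all 1 ≤ i ≤ I and e₂^{m+2}_j = ρ̄·e₂^m_j for all 1 ≤ j ≤ J; i.e., ρ̄ is the contraction factor of the Schwarz iteration. -/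
/-- Contraction factor of the implicit Schwarz iteration with classic (Dirichlet)
interface conditions for two coupled linear advection–diffusion–reaction equations:
with `ρ̄ = -(η₁-ε₁)(η₂+ε₂)/(R₁(I-1)·R₂(2))`, every error component is multiplied by `ρ̄`
after two Schwarz iterations. -/
theorem implicit_schwarz_contraction_classic
    (I J : ℕ) (hI : 3 ≤ I) (hJ : 3 ≤ J)
    (ε₁ ε₂ η₁ η₂ γ₁ γ₂ : ℝ)
    (R₁ R₂ : ℕ → ℝ)
    (hR₁base : R₁ 2 = 1 + 2 * ε₁ + γ₁)
    (hR₁rec : ∀ i : ℕ, 3 ≤ i → i ≤ I - 1 →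
      R₁ i = 1 + 2 * ε₁ + γ₁ + (η₁ ^ 2 - ε₁ ^ 2) / R₁ (i - 1))
    (hR₂base : R₂ (J - 1) = 1 + 2 * ε₂ + γ₂)
    (hR₂rec : ∀ j : ℕ, 2 ≤ j → j ≤ J - 2 →
      R₂ j = 1 + 2 * ε₂ + γ₂ + (η₂ ^ 2 - ε₂ ^ 2) / R₂ (j + 1))
    (hR₁ne : ∀ i : ℕ, 2 ≤ i → i ≤ I - 1 → R₁ i ≠ 0)
    (hR₂ne : ∀ j : ℕ, 2 ≤ j → j ≤ J - 1 → R₂ j ≠ 0)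
    (e₁ e₂ : ℕ → ℕ → ℝ)
    (hb₁ : ∀ m : ℕ, 1 ≤ m → e₁ m 1 = 0)
    (hb₂ : ∀ m : ℕ, 1 ≤ m → e₂ m J = 0)
    (heq₁ : ∀ m : ℕ, 1 ≤ m → ∀ i : ℕ, 2 ≤ i → i ≤ I - 1 →
      -(η₁ + ε₁) * e₁ m (i - 1) + (1 + 2 * ε₁ + γ₁) * e₁ m i
        + (η₁ - ε₁) * e₁ m (i + 1) = 0)
    (heq₂ : ∀ m : ℕ, 1 ≤ m → ∀ j : ℕ, 2 ≤ j → j ≤ J - 1 →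
      -(η₂ + ε₂) * e₂ m (j - 1) + (1 + 2 * ε₂ + γ₂) * e₂ m j
        + (η₂ - ε₂) * e₂ m (j + 1) = 0)
    (hint₁ : ∀ m : ℕ, e₁ (m + 1) I = e₂ m 2)
    (hint₂ : ∀ m : ℕ, e₂ (m + 1) 1 = e₁ m (I - 1)) :
    ∀ m : ℕ, 1 ≤ m →
      (∀ i : ℕ, 1 ≤ i → i ≤ I →
        e₁ (m + 2) i
          = -((η₁ - ε₁) * (η₂ + ε₂)) / (R₁ (I - 1) * R₂ 2) * e₁ m i) ∧
      (∀ j : ℕ, 1 ≤ j → j ≤ J →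
        e₂ (m + 2) j
          = -((η₁ - ε₁) * (η₂ + ε₂)) / (R₁ (I - 1) * R₂ 2) * e₂ m j) := by
  intro m hm
  -- reduction on grid 1: for interior nodes, e₁ n i is a fixed multiple of e₁ n (i+1)
  have key₁ : ∀ n, 1 ≤ n → ∀ i, 2 ≤ i → i ≤ I - 1 →
      e₁ n i = -(η₁ - ε₁) / R₁ i * e₁ n (i + 1) := by
    intro n hn i hi
    induction i, hi using Nat.le_induction with
    | base =>
      intro h2
      have heq := heq₁ n hn 2 (by norm_num) h2
      norm_num [hb₁ n hn] at heq
      have hne : R₁ 2 ≠ 0 := hR₁ne 2 le_rfl h2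
      rw [hR₁base] at hne ⊢
      have hne2 : 1 + ε₁ * 2 + γ₁ ≠ 0 := by rw [mul_comm]; exact hne
      field_simp
      linear_combination heq
    | succ i hi ih =>
      intro h
      have hi' : i ≤ I - 1 := by omega
      have Ei := ih hi'
      have heq := heq₁ n hn (i + 1) (by omega) h
      have hrec := hR₁rec (i + 1) (by omega) h
      simp only [Nat.add_sub_cancel] at heq hrec
      have hne : R₁ i ≠ 0 := hR₁ne i hi hi'
      have hne' : R₁ (i + 1) ≠ 0 := hR₁ne (i + 1) (by omega) h
      rw [Ei] at heq
      rw [div_mul_eq_mul_div, eq_div_iff hne', hrec]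
      field_simp at heq ⊢
      linear_combination heq
  -- reduction on grid 2: for interior nodes, e₂ n j is a fixed multiple of e₂ n (j-1)
  have key₂ : ∀ n, 1 ≤ n → ∀ j, 2 ≤ j → j ≤ J - 1 →
      e₂ n j = (η₂ + ε₂) / R₂ j * e₂ n (j - 1) := by
    intro n hn
    have top : e₂ n (J - 1) = (η₂ + ε₂) / R₂ (J - 1) * e₂ n (J - 1 - 1) := by
      have heq := heq₂ n hn (J - 1) (by omega) le_rfl
      have hJ1 : J - 1 + 1 = J := by omega
      rw [hJ1, hb₂ n hn] at heq
      have hne : R₂ (J - 1) ≠ 0 := hR₂ne (J - 1) (by omega) le_rfl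
      rw [hR₂base] at hne ⊢
      have hne2 : 1 + ε₂ * 2 + γ₂ ≠ 0 := by rw [mul_comm]; exact hne
      field_simp
      linear_combination heq
    have aux : ∀ d j, 2 ≤ j → j ≤ J - 1 → J - 1 - j ≤ d →
        e₂ n j = (η₂ + ε₂) / R₂ j * e₂ n (j - 1) := by
      intro d
      induction d with
      | zero =>
        intro j h2 hle hd
        have : j = J - 1 := by omega
        rw [this]; exact top
      | succ d ih =>
        intro j h2 hle hd
        by_cases hj : j = J - 1
        · rw [hj]; exact top
        · have hj2 : j ≤ J - 2 := by omega
          have Ei := ih (j + 1) (by omega) (by omega) (by omega)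
          simp only [Nat.add_sub_cancel] at Ei
          have heq := heq₂ n hn j h2 hle
          have hrec := hR₂rec j h2 hj2
          have hne : R₂ (j + 1) ≠ 0 := hR₂ne (j + 1) (by omega) (by omega)
          have hne' : R₂ j ≠ 0 := hR₂ne j h2 hle
          rw [Ei] at heq
          rw [div_mul_eq_mul_div, eq_div_iff hne', hrec]
          field_simp at heq ⊢
          linear_combination heq
    intro j h2 hle
    exact aux (J - 1) j h2 hle (by omega)
  have hRI : R₁ (I - 1) ≠ 0 := hR₁ne (I - 1) (by omega) le_rfl
  have hR2 : R₂ 2 ≠ 0 := hR₂ne 2 le_rfl (by omega)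
  have hI1 : I - 1 + 1 = I := by omega
  -- interface value on grid 1 after two iterations
  have topI : e₁ (m + 2) I = -((η₁ - ε₁) * (η₂ + ε₂)) / (R₁ (I - 1) * R₂ 2) * e₁ m I := by
    have h1 : e₁ (m + 2) I = e₂ (m + 1) 2 := hint₁ (m + 1)
    have h2' := key₂ (m + 1) (by omega) 2 le_rfl (by omega)
    have h3 : e₂ (m + 1) 1 = e₁ m (I - 1) := hint₂ m
    have h4 := key₁ m hm (I - 1) (by omega) le_rfl
    rw [hI1] at h4
    norm_num at h2'
    rw [h1, h2', h3, h4]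
    field_simp
  -- interface value on grid 2 after two iterations
  have bot2 : e₂ (m + 2) 1 = -((η₁ - ε₁) * (η₂ + ε₂)) / (R₁ (I - 1) * R₂ 2) * e₂ m 1 := by
    have h1 : e₂ (m + 2) 1 = e₁ (m + 1) (I - 1) := hint₂ (m + 1)
    have h4 := key₁ (m + 1) (by omega) (I - 1) (by omega) le_rfl
    rw [hI1] at h4
    have h5 : e₁ (m + 1) I = e₂ m 2 := hint₁ m
    have h2' := key₂ m hm 2 le_rfl (by omega)
    norm_num at h2'
    rw [h1, h4, h5, h2']
    field_simp
  constructor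
  · -- grid 1
    have aux : ∀ d i, 2 ≤ i → i ≤ I - 1 → I - 1 - i ≤ d →
        e₁ (m + 2) i = -((η₁ - ε₁) * (η₂ + ε₂)) / (R₁ (I - 1) * R₂ 2) * e₁ m i := by
      intro d
      induction d with
      | zero =>
        intro i h2 hle hd
        have hiI : i = I - 1 := by omega
        rw [hiI, key₁ (m + 2) (by omega) (I - 1) (by omega) le_rfl,
          key₁ m hm (I - 1) (by omega) le_rfl, hI1, topI]
        ring
      | succ d ih =>
        intro i h2 hle hd
        by_cases hj : i = I - 1
        · rw [hj, key₁ (m + 2) (by omega) (I - 1) (by omega) le_rfl,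
            key₁ m hm (I - 1) (by omega) le_rfl, hI1, topI]
          ring
        · have hnext : e₁ (m + 2) (i + 1)
              = -((η₁ - ε₁) * (η₂ + ε₂)) / (R₁ (I - 1) * R₂ 2) * e₁ m (i + 1) :=
            ih (i + 1) (by omega) (by omega) (by omega)
          rw [key₁ (m + 2) (by omega) i h2 hle, key₁ m hm i h2 hle, hnext]
          ring
    intro i h1 hle
    rcases eq_or_lt_of_le h1 with h | h
    · rw [← h, hb₁ m hm, hb₁ (m + 2) (by omega)]; ring
    · rcases eq_or_lt_of_le hle with h' | h'
      · rw [h']; exact topI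
      · exact aux (I - 1) i (by omega) (by omega) (by omega)
  · -- grid 2
    have aux : ∀ j, 2 ≤ j → j ≤ J - 1 →
        e₂ (m + 2) j = -((η₁ - ε₁) * (η₂ + ε₂)) / (R₁ (I - 1) * R₂ 2) * e₂ m j := by
      intro j hj
      induction j, hj using Nat.le_induction with
      | base =>
        intro hle
        have k1 := key₂ (m + 2) (by omega) 2 le_rfl hle
        have k2 := key₂ m hm 2 le_rfl hle
        norm_num at k1 k2
        rw [k1, k2, bot2]
        ring
      | succ j hj ih =>
        intro hle
        have hprev := ih (by omega)
        have k1 := key₂ (m + 2) (by omega) (j + 1) (by omega) hle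
        have k2 := key₂ m hm (j + 1) (by omega) hle
        simp only [Nat.add_sub_cancel] at k1 k2
        rw [k1, k2, hprev]
        ring
    intro j h1 hle
    rcases eq_or_lt_of_le h1 with h | h
    · rw [← h]; exact bot2
    · rcases eq_or_lt_of_le hle with h' | h'
      · rw [h', hb₂ m hm, hb₂ (m + 2) (by omega)]; ring
      · exact aux j (by omega) (by omega)
end

section
/- Let P, S, p, q ∈ ℝ with p ≠ 0, q ≠ 0 and PS + pq ≠ 0, and define ρ̄(α,β) = −[((α+1)q − S)·((β−1)p − P)] / [((α+1)P + p)·((β−1)S + q)]. Set α* = S/q − 1 and β* = P/p + 1. Then (α*+1)P + p = (PS+pq)/q ≠ 0 and (β*−1)S + q = (PS+pq)/p ≠ 0, and ρ̄(α*,β*) = 0; moreover both partial derivatives ∂ρ̄/∂α and ∂ρ̄/∂β vanish at (α*,β*). -/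
/-- Contraction factor of the implicit Schwarz iteration with optimized interface
parameters `α, β`, with abstract parameters `P = R₁(I-1)`, `S = R₂(2)`, `p = η₁-ε₁`,
`q = η₂+ε₂`. -/
noncomputable def rhoBar (P S p q α β : ℝ) : ℝ :=
  -(((α + 1) * q - S) * ((β - 1) * p - P)) /
    (((α + 1) * P + p) * ((β - 1) * S + q))

/-- At the optimal interface parameters `α* = S/q - 1`, `β* = P/p + 1`, the denominators
of the contraction factor are nonzero, the contraction factor vanishes, and both of its
first partial derivatives vanish. -/
theorem rhoBar_optimal_zero_and_critical
    (P S p q : ℝ) (hp : p ≠ 0) (hq : q ≠ 0) (h : P * S + p * q ≠ 0) :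
    (S / q - 1 + 1) * P + p = (P * S + p * q) / q ∧
    (S / q - 1 + 1) * P + p ≠ 0 ∧
    (P / p + 1 - 1) * S + q = (P * S + p * q) / p ∧
    (P / p + 1 - 1) * S + q ≠ 0 ∧
    rhoBar P S p q (S / q - 1) (P / p + 1) = 0 ∧
    deriv (fun a => rhoBar P S p q a (P / p + 1)) (S / q - 1) = 0 ∧
    deriv (fun b => rhoBar P S p q (S / q - 1) b) (P / p + 1) = 0 := by
  have hb : (P / p + 1 - 1) * p - P = 0 := by field_simp; ring
  have ha : (S / q - 1 + 1) * q - S = 0 := by field_simp; ring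
  have hA : (fun a : ℝ => rhoBar P S p q a (P / p + 1)) = fun _ => 0 := by
    funext a; unfold rhoBar; rw [hb]; simp
  have hB : (fun b : ℝ => rhoBar P S p q (S / q - 1) b) = fun _ => 0 := by
    funext b; unfold rhoBar; rw [ha]; simp
  refine ⟨by field_simp; ring, ?_, by field_simp; ring, ?_, ?_, ?_, ?_⟩
  · rw [show (S / q - 1 + 1) * P + p = (P * S + p * q) / q by field_simp; ring]
    exact div_ne_zero h hq
  · rw [show (P / p + 1 - 1) * S + q = (P * S + p * q) / p by field_simp; ring]
    exact div_ne_zero h hp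
  · simpa using congrFun hA (S / q - 1)
  · rw [hA]; simp
  · rw [hB]; simp
end

section
/- Let P, S, p, q ∈ ℝ with p ≠ 0, q ≠ 0 and PS + pq ≠ 0, and define ρ̄(α,β) = −[((α+1)q − S)·((β−1)p − P)] / [((α+1)P + p)·((β−1)S + q)]. Set α* = S/q − 1 and β* = P/p + 1. Then at the point (α*,β*): the second partial derivative of ρ̄ with respect to α is 0, the second partial derivative of ρ̄ with respect to β is 0, and the mixed second partial derivative ∂²ρ̄/∂α∂β equals −p²q²/(PS+pq)², which is nonzero; consequently the second-derivative-test discriminant (∂²ρ̄/∂α²)(∂²ρ̄/∂β²) − (∂²ρ̄/∂α∂β)² is strictly negative at (α*,β*). -/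
/-- At the optimal interface parameters `α* = S/q - 1`, `β* = P/p + 1`, the pure second
partial derivatives of the contraction factor vanish, the mixed second partial derivative
equals `-p²q²/(PS+pq)² ≠ 0`, and hence the second-derivative-test discriminant is
strictly negative. -/
theorem rhoBar_second_derivatives_at_optimum
    (P S p q : ℝ) (hp : p ≠ 0) (hq : q ≠ 0) (h : P * S + p * q ≠ 0) :
    deriv (fun a => deriv (fun a' => rhoBar P S p q a' (P / p + 1)) a) (S / q - 1) = 0 ∧
    deriv (fun b => deriv (fun b' => rhoBar P S p q (S / q - 1) b') b) (P / p + 1) = 0 ∧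
    deriv (fun b => deriv (fun a => rhoBar P S p q a b) (S / q - 1)) (P / p + 1)
      = -(p ^ 2 * q ^ 2) / (P * S + p * q) ^ 2 ∧
    -(p ^ 2 * q ^ 2) / (P * S + p * q) ^ 2 ≠ 0 ∧
    deriv (fun a => deriv (fun a' => rhoBar P S p q a' (P / p + 1)) a) (S / q - 1)
        * deriv (fun b => deriv (fun b' => rhoBar P S p q (S / q - 1) b') b) (P / p + 1)
      - (deriv (fun b => deriv (fun a => rhoBar P S p q a b) (S / q - 1)) (P / p + 1)) ^ 2
      < 0 := by
  -- Pure second derivatives: the restricted functions are identically zero.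
  have hb0 : (P / p + 1 - 1) * p - P = 0 := by field_simp; ring
  have ha0 : (S / q - 1 + 1) * q - S = 0 := by field_simp; ring
  have h1 : (fun a' => rhoBar P S p q a' (P / p + 1)) = fun _ => (0 : ℝ) := by
    funext a; simp only [rhoBar, hb0, mul_zero, neg_zero, zero_div]
  have h2 : (fun b' => rhoBar P S p q (S / q - 1) b') = fun _ => (0 : ℝ) := by
    funext b
    simp only [rhoBar]
    rw [show (S / q - 1 + 1) * q - S = 0 from ha0, zero_mul, neg_zero, zero_div]
  have e1 : deriv (fun a => deriv (fun a' => rhoBar P S p q a' (P / p + 1)) a) (S / q - 1) = 0 := by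
    simp [h1]
  have e2 : deriv (fun b => deriv (fun b' => rhoBar P S p q (S / q - 1) b') b) (P / p + 1) = 0 := by
    simp [h2]
  -- Nonvanishing constants
  have hA : S / q * P + p ≠ 0 := by
    have hAeq : S / q * P + p = (P * S + p * q) / q := by field_simp
    rw [hAeq]; exact div_ne_zero h hq
  have hDopt : (P / p + 1 - 1) * S + q ≠ 0 := by
    have : (P / p + 1 - 1) * S + q = (P * S + p * q) / p := by field_simp; ring
    rw [this]; exact div_ne_zero h hp
  -- Inner derivative formula for any b with nonvanishing denominator factor
  have inner : ∀ b : ℝ, (b - 1) * S + q ≠ 0 →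
      deriv (fun a => rhoBar P S p q a b) (S / q - 1)
        = -(q * ((b - 1) * p - P)) / ((S / q * P + p) * ((b - 1) * S + q)) := by
    intro b hD
    set x := S / q - 1 with hx
    have hnum : HasDerivAt (fun a : ℝ => -(((a + 1) * q - S) * ((b - 1) * p - P)))
        (-(1 * q * ((b - 1) * p - P))) x :=
      (((((hasDerivAt_id x).add_const 1).mul_const q).sub_const S).mul_const
        ((b - 1) * p - P)).neg
    have hden : HasDerivAt (fun a : ℝ => ((a + 1) * P + p) * ((b - 1) * S + q))
        (1 * P * ((b - 1) * S + q)) x :=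
      ((((hasDerivAt_id x).add_const 1).mul_const P).add_const p).mul_const ((b - 1) * S + q)
    have hx1 : x + 1 = S / q := by rw [hx]; ring
    have hdne : ((x + 1) * P + p) * ((b - 1) * S + q) ≠ 0 := by
      rw [hx1]; exact mul_ne_zero hA hD
    have := ((hnum.div hden hdne)).deriv
    simp only [Pi.div_def] at this
    simp only [rhoBar]
    rw [this]
    rw [hx1]
    rw [show S / q * q - S = 0 by field_simp; ring, zero_mul, neg_zero, zero_mul, sub_zero]
    rw [sq, mul_div_mul_right _ _ (mul_ne_zero hA hD)]
    ring_nf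
  -- Outer derivative: eventually-equal near β*
  have hc : ContinuousAt (fun b : ℝ => (b - 1) * S + q) (P / p + 1) := by fun_prop
  have hev : ∀ᶠ b in nhds (P / p + 1), (b - 1) * S + q ≠ 0 := hc.eventually_ne hDopt
  have hgEq : (fun b => deriv (fun a => rhoBar P S p q a b) (S / q - 1)) =ᶠ[nhds (P / p + 1)]
      (fun b => -(q * ((b - 1) * p - P)) / ((S / q * P + p) * ((b - 1) * S + q))) :=
    hev.mono fun b hb => inner b hb
  have e3 : deriv (fun b => deriv (fun a => rhoBar P S p q a b) (S / q - 1)) (P / p + 1)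
      = -(p ^ 2 * q ^ 2) / (P * S + p * q) ^ 2 := by
    rw [hgEq.deriv_eq]
    set y := P / p + 1 with hy
    have hnum : HasDerivAt (fun b : ℝ => -(q * ((b - 1) * p - P))) (-(q * (1 * p))) y :=
      ((((hasDerivAt_id y).sub_const 1).mul_const p).sub_const P).const_mul q |>.neg
    have hden : HasDerivAt (fun b : ℝ => (S / q * P + p) * ((b - 1) * S + q))
        ((S / q * P + p) * (1 * S)) y :=
      ((((hasDerivAt_id y).sub_const 1).mul_const S).add_const q).const_mul (S / q * P + p)
    have hdne : (S / q * P + p) * ((y - 1) * S + q) ≠ 0 := mul_ne_zero hA hDopt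
    have hdd := (hnum.div hden hdne).deriv
    simp only [Pi.div_def] at hdd
    rw [hdd]
    have hy1 : y - 1 = P / p := by rw [hy]; ring
    rw [hy1]
    rw [show P / p * p - P = 0 by field_simp; ring, mul_zero, neg_zero, zero_mul, sub_zero]
    have hD' : P / p * S + q ≠ 0 := by
      have : P / p * S + q = (P * S + p * q) / p := by field_simp
      rw [this]; exact div_ne_zero h hp
    rw [sq, mul_div_mul_right _ _ (mul_ne_zero hA hD')]
    rw [div_eq_div_iff (mul_ne_zero hA hD') (pow_ne_zero 2 h)]
    field_simp
  have e4 : -(p ^ 2 * q ^ 2) / (P * S + p * q) ^ 2 ≠ 0 := by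
    apply div_ne_zero
    · simpa using mul_ne_zero (pow_ne_zero 2 hp) (pow_ne_zero 2 hq)
    · exact pow_ne_zero 2 h
  refine ⟨e1, e2, e3, e4, ?_⟩
  rw [e1, e2, e3]
  have : (0 : ℝ) < (-(p ^ 2 * q ^ 2) / (P * S + p * q) ^ 2) ^ 2 :=
    pow_pos (abs_pos.mpr e4) 2 |>.trans_le (by rw [sq_abs])
  nlinarith [sq_nonneg (-(p ^ 2 * q ^ 2) / (P * S + p * q) ^ 2)]
end

section
/- Let P, S, p, q ∈ ℝ with p ≠ 0, q ≠ 0 and PS + pq ≠ 0, and define ρ̄(α,β) = −[((α+1)q − S)·((β−1)p − P)] / [((α+1)P + p)·((β−1)S + q)]. Set α* = S/q − 1 and β* = P/p + 1. Then (α*,β*) is a saddle point of ρ̄: the function ρ̄ attains neither a local minimum nor a local maximum at (α*,β*); equivalently, every neighborhood of (α*,β*) contains points where ρ̄ > ρ̄(α*,β*) = 0 and points where ρ̄ < 0. -/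
lemma rhoBar_path (P S p q : ℝ) (hp : p ≠ 0) (hq : q ≠ 0) (t s : ℝ) :
    rhoBar P S p q (S / q - 1 + t) (P / p + 1 + s) =
      -(t * s * (p * q)) /
        ((t * P + (P * S + p * q) / q) * (s * S + (P * S + p * q) / p)) := by
  have h1 : (S / q - 1 + t + 1) * q - S = t * q := by field_simp; ring
  have h2 : (P / p + 1 + s - 1) * p - P = s * p := by field_simp; ring
  have h3 : (S / q - 1 + t + 1) * P + p = t * P + (P * S + p * q) / q := by
    field_simp; ring
  have h4 : (P / p + 1 + s - 1) * S + q = s * S + (P * S + p * q) / p := by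
    field_simp; ring
  rw [rhoBar, h1, h2, h3, h4]
  ring_nf


/-- The optimal point `(α*, β*) = (S/q - 1, P/p + 1)` is a saddle point of the
contraction factor: `ρ̄(α*,β*) = 0` and `ρ̄` attains neither a local minimum nor a local
maximum there. -/
theorem rhoBar_optimal_is_saddle
    (P S p q : ℝ) (hp : p ≠ 0) (hq : q ≠ 0) (h : P * S + p * q ≠ 0) :
    rhoBar P S p q (S / q - 1) (P / p + 1) = 0 ∧
    ¬ IsLocalMin (fun z : ℝ × ℝ => rhoBar P S p q z.1 z.2) (S / q - 1, P / p + 1) ∧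
    ¬ IsLocalMax (fun z : ℝ × ℝ => rhoBar P S p q z.1 z.2) (S / q - 1, P / p + 1) := by
  set K := P * S + p * q with hKdef
  have hval : rhoBar P S p q (S / q - 1) (P / p + 1) = 0 := by
    have := rhoBar_path P S p q hp hq 0 0
    simpa using this
  refine ⟨hval, ?_, ?_⟩
  · -- not a local min: along (t, t) the value is negative for small t ≠ 0
    intro hmin
    have hφ : Filter.Tendsto (fun t : ℝ => (S / q - 1 + t, P / p + 1 + t)) (nhds 0)
        (nhds ((S / q - 1 : ℝ), (P / p + 1 : ℝ))) := by
      have : Continuous (fun t : ℝ => (S / q - 1 + t, P / p + 1 + t)) := by continuity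
      simpa using this.tendsto 0
    have hmin' : ∀ᶠ t in nhds (0 : ℝ), (0 : ℝ) ≤
        rhoBar P S p q (S / q - 1 + t) (P / p + 1 + t) := by
      have := hφ.eventually hmin
      simpa [hval] using this
    -- denominator-based positivity
    have hd : ContinuousAt (fun t : ℝ =>
        (p * q) / ((t * P + K / q) * (t * S + K / p))) 0 := by
      apply ContinuousAt.div
      · exact continuousAt_const
      · fun_prop
      · simp only [zero_mul, zero_add]
        exact mul_ne_zero (div_ne_zero h hq) (div_ne_zero h hp)
    have h0pos : (0 : ℝ) < (p * q) / ((0 * P + K / q) * (0 * S + K / p)) := by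
      have e : (p * q) / (((0:ℝ) * P + K / q) * (0 * S + K / p)) = (p * q) ^ 2 / K ^ 2 := by
        field_simp; ring_nf; rw [← mul_pow, mul_inv_cancel₀ h, one_pow]
      rw [e]
      have hpq : p * q ≠ 0 := mul_ne_zero hp hq
      positivity
    have hev : ∀ᶠ t in nhds (0 : ℝ), (0 : ℝ) <
        (p * q) / ((t * P + K / q) * (t * S + K / p)) :=
      hd.eventually (eventually_gt_nhds h0pos)
    have hneg : ∀ᶠ t in nhdsWithin (0 : ℝ) {0}ᶜ,
        rhoBar P S p q (S / q - 1 + t) (P / p + 1 + t) < 0 := by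
      filter_upwards [nhdsWithin_le_nhds hev, self_mem_nhdsWithin] with t ht htne
      rw [rhoBar_path P S p q hp hq t t]
      have : -(t * t * (p * q)) / ((t * P + K / q) * (t * S + K / p)) =
          -(t ^ 2) * ((p * q) / ((t * P + K / q) * (t * S + K / p))) := by ring
      rw [this]
      have htne' : t ≠ 0 := htne
      have ht2 : (0:ℝ) < t ^ 2 := by positivity
      nlinarith
    have : ∀ᶠ t in nhdsWithin (0 : ℝ) {0}ᶜ, False := by
      filter_upwards [hneg, nhdsWithin_le_nhds hmin'] with t h1 h2
      linarith
    exact (this.exists).elim fun _ hf => hf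
  · -- not a local max: along (t, -t) the value is positive for small t ≠ 0
    intro hmax
    have hφ : Filter.Tendsto (fun t : ℝ => (S / q - 1 + t, P / p + 1 + -t)) (nhds 0)
        (nhds ((S / q - 1 : ℝ), (P / p + 1 : ℝ))) := by
      have : Continuous (fun t : ℝ => (S / q - 1 + t, P / p + 1 + -t)) := by continuity
      simpa using this.tendsto 0
    have hmax' : ∀ᶠ t in nhds (0 : ℝ),
        rhoBar P S p q (S / q - 1 + t) (P / p + 1 + -t) ≤ 0 := by
      have := hφ.eventually hmax
      simpa [hval] using this
    have hd : ContinuousAt (fun t : ℝ =>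
        (p * q) / ((t * P + K / q) * (-t * S + K / p))) 0 := by
      apply ContinuousAt.div
      · exact continuousAt_const
      · fun_prop
      · simp only [zero_mul, neg_zero, zero_add]
        exact mul_ne_zero (div_ne_zero h hq) (div_ne_zero h hp)
    have h0pos : (0 : ℝ) < (p * q) / ((0 * P + K / q) * (-0 * S + K / p)) := by
      have e : (p * q) / (((0:ℝ) * P + K / q) * (-0 * S + K / p)) = (p * q) ^ 2 / K ^ 2 := by
        field_simp; ring_nf; rw [← mul_pow, mul_inv_cancel₀ h, one_pow]
      rw [e]
      have hpq : p * q ≠ 0 := mul_ne_zero hp hq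
      positivity
    have hev : ∀ᶠ t in nhds (0 : ℝ), (0 : ℝ) <
        (p * q) / ((t * P + K / q) * (-t * S + K / p)) :=
      hd.eventually (eventually_gt_nhds h0pos)
    have hpos : ∀ᶠ t in nhdsWithin (0 : ℝ) {0}ᶜ,
        0 < rhoBar P S p q (S / q - 1 + t) (P / p + 1 + -t) := by
      filter_upwards [nhdsWithin_le_nhds hev, self_mem_nhdsWithin] with t ht htne
      rw [rhoBar_path P S p q hp hq t (-t)]
      have : -(t * -t * (p * q)) / ((t * P + K / q) * (-t * S + K / p)) =
          t ^ 2 * ((p * q) / ((t * P + K / q) * (-t * S + K / p))) := by ring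
      rw [this]
      have htne' : t ≠ 0 := htne
      have ht2 : (0:ℝ) < t ^ 2 := by positivity
      nlinarith
    have : ∀ᶠ t in nhdsWithin (0 : ℝ) {0}ᶜ, False := by
      filter_upwards [hpos, nhdsWithin_le_nhds hmax'] with t h1 h2
      linarith
    exact (this.exists).elim fun _ hf => hf
end

section
/- Let I, J ≥ 3, let ε_k, γ_k ∈ ℝ with s_k := 1+2ε_k+γ_k (k = 1,2), and let η₁ : {2,…,I−1} → ℝ and η₂ : {2,…,J−1} → ℝ. Define R₁(2) = s₁ and R₁(i) = s₁ + (η₁(i−1)−ε₁)(η₁(i)+ε₁)/R₁(i−1) for 3 ≤ i ≤ I−1, and R₂(J−1) = s₂ and R₂(j) = s₂ + (η₂(j)−ε₂)(η₂(j+1)+ε₂)/R₂(j+1) for 2 ≤ j ≤ J−2; assume R₁(i) ≠ 0 for 2 ≤ i ≤ I−1 and R₂(j) ≠ 0 for 2 ≤ j ≤ J−1. Suppose the error sequences e₁^m ∈ ℝ^I, e₂^m ∈ ℝ^J satisfy, for every m ≥ 1: e₁^m_1 = 0 and e₂^m_J = 0; −(η₁(i)+ε₁)e₁^m_{i−1}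 + s₁ e₁^m_i + (η₁(i)−ε₁)e₁^m_{i+1} = 0 for 2 ≤ i ≤ I−1; −(η₂(j)+ε₂)e₂^m_{j−1} + s₂ e₂^m_j + (η₂(j)−ε₂)e₂^m_{j+1} = 0 for 2 ≤ j ≤ J−1; and the classic interface conditions e₁^m_I = e₂^{m−1}_2 and e₂^m_1 = e₁^{m−1}_{I−1}. Then, with ρ̄ := −(η₁(I−1)−ε₁)(η₂(2)+ε₂)/(R₁(I−1)·R₂(2)), for every m ≥ 1 one has e₁^{m+2}_i = ρ̄·e₁^m_i for all 1 ≤ i ≤ I and e₂^{m+2}_j = ρ̄·e₂^m_j for all 1 ≤ j ≤ J. -/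
/-- Contraction factor of the implicit Schwarz iteration with classic (Dirichlet)
interface conditions for two coupled linearized viscous Burgers equations with reaction
terms, with node-dependent frozen advection parameters `η₁, η₂`: with
`ρ̄ = -(η₁(I-1)-ε₁)(η₂(2)+ε₂)/(R₁(I-1)·R₂(2))`, every error component is multiplied by
`ρ̄` after two Schwarz iterations. -/
theorem implicit_schwarz_contraction_classic_burgers
    (I J : ℕ) (hI : 3 ≤ I) (hJ : 3 ≤ J)
    (ε₁ ε₂ γ₁ γ₂ : ℝ) (η₁ η₂ : ℕ → ℝ)
    (R₁ R₂ : ℕ → ℝ)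
    (hR₁base : R₁ 2 = 1 + 2 * ε₁ + γ₁)
    (hR₁rec : ∀ i : ℕ, 3 ≤ i → i ≤ I - 1 →
      R₁ i = 1 + 2 * ε₁ + γ₁ + (η₁ (i - 1) - ε₁) * (η₁ i + ε₁) / R₁ (i - 1))
    (hR₂base : R₂ (J - 1) = 1 + 2 * ε₂ + γ₂)
    (hR₂rec : ∀ j : ℕ, 2 ≤ j → j ≤ J - 2 →
      R₂ j = 1 + 2 * ε₂ + γ₂ + (η₂ j - ε₂) * (η₂ (j + 1) + ε₂) / R₂ (j + 1))
    (hR₁ne : ∀ i : ℕ, 2 ≤ i → i ≤ I - 1 → R₁ i ≠ 0)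
    (hR₂ne : ∀ j : ℕ, 2 ≤ j → j ≤ J - 1 → R₂ j ≠ 0)
    (e₁ e₂ : ℕ → ℕ → ℝ)
    (hb₁ : ∀ m : ℕ, 1 ≤ m → e₁ m 1 = 0)
    (hb₂ : ∀ m : ℕ, 1 ≤ m → e₂ m J = 0)
    (heq₁ : ∀ m : ℕ, 1 ≤ m → ∀ i : ℕ, 2 ≤ i → i ≤ I - 1 →
      -(η₁ i + ε₁) * e₁ m (i - 1) + (1 + 2 * ε₁ + γ₁) * e₁ m i
        + (η₁ i - ε₁) * e₁ m (i + 1) = 0)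
    (heq₂ : ∀ m : ℕ, 1 ≤ m → ∀ j : ℕ, 2 ≤ j → j ≤ J - 1 →
      -(η₂ j + ε₂) * e₂ m (j - 1) + (1 + 2 * ε₂ + γ₂) * e₂ m j
        + (η₂ j - ε₂) * e₂ m (j + 1) = 0)
    (hint₁ : ∀ m : ℕ, e₁ (m + 1) I = e₂ m 2)
    (hint₂ : ∀ m : ℕ, e₂ (m + 1) 1 = e₁ m (I - 1)) :
    ∀ m : ℕ, 1 ≤ m →
      (∀ i : ℕ, 1 ≤ i → i ≤ I →
        e₁ (m + 2) i
          = -((η₁ (I - 1) - ε₁) * (η₂ 2 + ε₂)) / (R₁ (I - 1) * R₂ 2) * e₁ m i) ∧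
      (∀ j : ℕ, 1 ≤ j → j ≤ J →
        e₂ (m + 2) j
          = -((η₁ (I - 1) - ε₁) * (η₂ 2 + ε₂)) / (R₁ (I - 1) * R₂ 2) * e₂ m j) := by
  have hI2 : 2 ≤ I - 1 := by omega
  have hI1 : I - 1 + 1 = I := by omega
  have hJ2 : 2 ≤ J - 1 := by omega
  -- forward elimination for grid 1
  have L1 : ∀ i, 2 ≤ i → i ≤ I - 1 → ∀ m, 1 ≤ m →
      R₁ i * e₁ m i = -(η₁ i - ε₁) * e₁ m (i + 1) := by
    intro i hi
    induction i, hi using Nat.le_induction with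
    | base =>
      intro hle m hm
      have h := heq₁ m hm 2 (by norm_num) hle
      norm_num [hb₁ m hm] at h
      rw [hR₁base]
      linear_combination h
    | succ n hn ih =>
      intro hle m hm
      have hnle : n ≤ I - 1 := by omega
      have ihm := ih hnle m hm
      have h := heq₁ m hm (n + 1) (by omega) hle
      have hrec := hR₁rec (n + 1) (by omega) hle
      simp only [Nat.add_sub_cancel] at h hrec
      have hr : R₁ n ≠ 0 := hR₁ne n hn hnle
      have hr' : R₁ (n + 1) ≠ 0 := hR₁ne (n + 1) (by omega) hle
      have hrec' : R₁ (n + 1) * R₁ n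
          = (1 + 2 * ε₁ + γ₁) * R₁ n + (η₁ n - ε₁) * (η₁ (n + 1) + ε₁) := by
        field_simp at hrec
        linear_combination hrec
      have key : R₁ n * (R₁ (n + 1) * e₁ m (n + 1)
          + (η₁ (n + 1) - ε₁) * e₁ m (n + 1 + 1)) = 0 := by
        linear_combination R₁ n * h + (η₁ (n + 1) + ε₁) * ihm + e₁ m (n + 1) * hrec'
      rcases mul_eq_zero.mp key with h0 | h0
      · exact absurd h0 hr
      · linear_combination h0
  -- backward elimination for grid 2
  have L2 : ∀ d j, 2 ≤ j → j ≤ J - 1 → J - 1 ≤ j + d → ∀ m, 1 ≤ m →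
      R₂ j * e₂ m j = (η₂ j + ε₂) * e₂ m (j - 1) := by
    intro d
    induction d with
    | zero =>
      intro j hj hjle hge m hm
      have hjeq : j = J - 1 := by omega
      subst hjeq
      have h := heq₂ m hm (J - 1) hj le_rfl
      have hJ1 : J - 1 + 1 = J := by omega
      rw [hJ1, hb₂ m hm] at h
      rw [hR₂base]
      linear_combination h
    | succ d ih =>
      intro j hj hjle hge m hm
      rcases Nat.lt_or_ge j (J - 1) with hlt | hge'
      · have ih1 := ih (j + 1) (by omega) (by omega) (by omega) m hm
        simp only [Nat.add_sub_cancel] at ih1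
        have h := heq₂ m hm j hj hjle
        have hrec := hR₂rec j hj (by omega)
        have hr : R₂ (j + 1) ≠ 0 := hR₂ne (j + 1) (by omega) (by omega)
        have hr' : R₂ j ≠ 0 := hR₂ne j hj hjle
        have hrec' : R₂ j * R₂ (j + 1)
            = (1 + 2 * ε₂ + γ₂) * R₂ (j + 1) + (η₂ j - ε₂) * (η₂ (j + 1) + ε₂) := by
          field_simp at hrec
          linear_combination hrec
        have key : R₂ (j + 1) * (R₂ j * e₂ m j - (η₂ j + ε₂) * e₂ m (j - 1)) = 0 := by
          linear_combination R₂ (j + 1) * h + e₂ m j * hrec' - (η₂ j - ε₂) * ih1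
        rcases mul_eq_zero.mp key with h0 | h0
        · exact absurd h0 hr
        · linear_combination h0
      · have hjeq : j = J - 1 := by omega
        subst hjeq
        have h := heq₂ m hm (J - 1) hj le_rfl
        have hJ1 : J - 1 + 1 = J := by omega
        rw [hJ1, hb₂ m hm] at h
        rw [hR₂base]
        linear_combination h
  have hr1 : R₁ (I - 1) ≠ 0 := hR₁ne _ hI2 le_rfl
  have hr2 : R₂ 2 ≠ 0 := hR₂ne 2 le_rfl hJ2
  have A1 : ∀ m, 1 ≤ m → R₁ (I - 1) * e₁ m (I - 1) = -(η₁ (I - 1) - ε₁) * e₁ m I := by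
    intro m hm
    have h := L1 (I - 1) hI2 le_rfl m hm
    rwa [hI1] at h
  have A2 : ∀ m, 1 ≤ m → R₂ 2 * e₂ m 2 = (η₂ 2 + ε₂) * e₂ m 1 := by
    intro m hm
    have h := L2 J 2 le_rfl hJ2 (by omega) m hm
    norm_num at h
    exact h
  set ρ := -((η₁ (I - 1) - ε₁) * (η₂ 2 + ε₂)) / (R₁ (I - 1) * R₂ 2) with hρ
  have G1 : ∀ m, 1 ≤ m → e₁ (m + 2) I = ρ * e₁ m I := by
    intro m hm
    have h1 : e₁ (m + 2) I = e₂ (m + 1) 2 := hint₁ (m + 1)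
    have h2 := A2 (m + 1) (by omega)
    have h3 : e₂ (m + 1) 1 = e₁ m (I - 1) := hint₂ m
    have h4 := A1 m hm
    have key : (R₁ (I - 1) * R₂ 2) * e₂ (m + 1) 2
        = -((η₁ (I - 1) - ε₁) * (η₂ 2 + ε₂)) * e₁ m I := by
      linear_combination R₁ (I - 1) * h2 + (η₂ 2 + ε₂) * R₁ (I - 1) * h3
        + (η₂ 2 + ε₂) * h4
    rw [h1, hρ, div_mul_eq_mul_div, eq_div_iff (mul_ne_zero hr1 hr2)]
    linear_combination key
  have G2 : ∀ m, 1 ≤ m → e₂ (m + 2) 1 = ρ * e₂ m 1 := by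
    intro m hm
    have h1 : e₂ (m + 2) 1 = e₁ (m + 1) (I - 1) := hint₂ (m + 1)
    have h2 := A1 (m + 1) (by omega)
    have h3 : e₁ (m + 1) I = e₂ m 2 := hint₁ m
    have h4 := A2 m hm
    have key : (R₁ (I - 1) * R₂ 2) * e₁ (m + 1) (I - 1)
        = -((η₁ (I - 1) - ε₁) * (η₂ 2 + ε₂)) * e₂ m 1 := by
      linear_combination R₂ 2 * h2 - (η₁ (I - 1) - ε₁) * R₂ 2 * h3
        - (η₁ (I - 1) - ε₁) * h4
    rw [h1, hρ, div_mul_eq_mul_div, eq_div_iff (mul_ne_zero hr1 hr2)]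
    linear_combination key
  intro m hm
  constructor
  · -- grid 1, downward induction from I
    have H1 : ∀ d i, 2 ≤ i → i ≤ I → I ≤ i + d → e₁ (m + 2) i = ρ * e₁ m i := by
      intro d
      induction d with
      | zero =>
        intro i hi hile hge
        have : i = I := by omega
        subst this
        exact G1 m hm
      | succ d ih =>
        intro i hi hile hge
        rcases Nat.lt_or_ge i I with hlt | hge'
        · have hiI1 : i ≤ I - 1 := by omega
          have hz := ih (i + 1) (by omega) (by omega) (by omega)
          have h2 := L1 i hi hiI1 (m + 2) (by omega)
          have h3 := L1 i hi hiI1 m hm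
          apply mul_left_cancel₀ (hR₁ne i hi hiI1)
          linear_combination h2 - ρ * h3 - (η₁ i - ε₁) * hz
        · have : i = I := by omega
          subst this
          exact G1 m hm
    intro i hi hile
    rcases Nat.lt_or_ge i 2 with h2 | h2
    · have : i = 1 := by omega
      subst this
      rw [hb₁ (m + 2) (by omega), hb₁ m hm, mul_zero]
    · exact H1 I i h2 hile (by omega)
  · -- grid 2, upward induction from 1
    have H2 : ∀ j, 1 ≤ j → j ≤ J - 1 → e₂ (m + 2) j = ρ * e₂ m j := by
      intro j hj
      induction j, hj using Nat.le_induction with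
      | base =>
        intro _
        exact G2 m hm
      | succ n hn ih =>
        intro hle
        have hn1 : n + 1 ≤ J - 1 := hle
        have hz := ih (by omega)
        have h2 := L2 J (n + 1) (by omega) hn1 (by omega) (m + 2) (by omega)
        have h3 := L2 J (n + 1) (by omega) hn1 (by omega) m hm
        simp only [Nat.add_sub_cancel] at h2 h3
        apply mul_left_cancel₀ (hR₂ne (n + 1) (by omega) hn1)
        linear_combination h2 - ρ * h3 + (η₂ (n + 1) + ε₂) * hz
    intro j hj hjle
    rcases Nat.lt_or_ge j J with hlt | hge
    · exact H2 j hj (by omega)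
    · have : j = J := by omega
      subst this
      rw [hb₂ (m + 2) (by omega), hb₂ m hm, mul_zero]
end

section
/- Let I, J ≥ 3, α, β ∈ ℝ, let ε_k, γ_k ∈ ℝ with s_k := 1+2ε_k+γ_k (k = 1,2), and let η₁ : {2,…,I−1} → ℝ and η₂ : {2,…,J−1} → ℝ. Define R₁(2) = s₁ and R₁(i) = s₁ + (η₁(i−1)−ε₁)(η₁(i)+ε₁)/R₁(i−1) for 3 ≤ i ≤ I−1, and R₂(J−1) = s₂ and R₂(j) = s₂ + (η₂(j)−ε₂)(η₂(j+1)+ε₂)/R₂(j+1) for 2 ≤ j ≤ J−2; assume R₁(i) ≠ 0 for 2 ≤ i ≤ I−1, R₂(j) ≠ 0 for 2 ≤ j ≤ J−1, (α+1)R₁(I−1) + (η₁(I−1)−ε₁) ≠ 0, and (β−1)R₂(2) + (η₂(2)+ε₂) ≠ 0. Suppose the error sequences e₁^m ∈ ℝ^I, e₂^m ∈ ℝ^J satisfy, for every m ≥ 1: e₁^m_1 = 0 and e₂^m_J = 0; −(η₁(i)+ε₁)e₁^m_{i−1} + s₁ e₁^m_i + (η₁(i)−ε₁)e₁^m_{i+1}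 = 0 for 2 ≤ i ≤ I−1; −(η₂(j)+ε₂)e₂^m_{j−1} + s₂ e₂^m_j + (η₂(j)−ε₂)e₂^m_{j+1} = 0 for 2 ≤ j ≤ J−1; and the optimized interface conditions (e₁^m_I − e₁^m_{I−1}) + α e₁^m_I = (e₂^{m−1}_2 − e₂^{m−1}_1) + α e₂^{m−1}_2 and (e₂^m_2 − e₂^m_1) + β e₂^m_1 = (e₁^{m−1}_I − e₁^{m−1}_{I−1}) + β e₁^{m−1}_{I−1}. Then, with ρ̄ := −[((α+1)(η₂(2)+ε₂) − R₂(2))·((β−1)(η₁(I−1)−ε₁) − R₁(I−1))] / [((α+1)R₁(I−1) + (η₁(I−1)−ε₁))·((β−1)R₂(2) + (η₂(2)+ε₂))], for every m ≥ 1 one has e₁^{m+2}_i = ρ̄·e₁^m_i for all 1 ≤ i ≤ I and e₂^{m+2}_j = ρ̄·e₂^m_j for all 1 ≤ j ≤ J. -/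
/-- Contraction factor of the implicit Schwarz iteration with optimized (Robin-type)
interface conditions with parameters `α, β` for two coupled linearized viscous Burgers
equations with reaction terms, with node-dependent frozen advection parameters
`η₁, η₂`. -/
theorem implicit_schwarz_contraction_optimized_burgers
    (I J : ℕ) (hI : 3 ≤ I) (hJ : 3 ≤ J) (α β : ℝ)
    (ε₁ ε₂ γ₁ γ₂ : ℝ) (η₁ η₂ : ℕ → ℝ)
    (R₁ R₂ : ℕ → ℝ)
    (hR₁base : R₁ 2 = 1 + 2 * ε₁ + γ₁)
    (hR₁rec : ∀ i : ℕ, 3 ≤ i → i ≤ I - 1 →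
      R₁ i = 1 + 2 * ε₁ + γ₁ + (η₁ (i - 1) - ε₁) * (η₁ i + ε₁) / R₁ (i - 1))
    (hR₂base : R₂ (J - 1) = 1 + 2 * ε₂ + γ₂)
    (hR₂rec : ∀ j : ℕ, 2 ≤ j → j ≤ J - 2 →
      R₂ j = 1 + 2 * ε₂ + γ₂ + (η₂ j - ε₂) * (η₂ (j + 1) + ε₂) / R₂ (j + 1))
    (hR₁ne : ∀ i : ℕ, 2 ≤ i → i ≤ I - 1 → R₁ i ≠ 0)
    (hR₂ne : ∀ j : ℕ, 2 ≤ j → j ≤ J - 1 → R₂ j ≠ 0)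
    (hden₁ : (α + 1) * R₁ (I - 1) + (η₁ (I - 1) - ε₁) ≠ 0)
    (hden₂ : (β - 1) * R₂ 2 + (η₂ 2 + ε₂) ≠ 0)
    (e₁ e₂ : ℕ → ℕ → ℝ)
    (hb₁ : ∀ m : ℕ, 1 ≤ m → e₁ m 1 = 0)
    (hb₂ : ∀ m : ℕ, 1 ≤ m → e₂ m J = 0)
    (heq₁ : ∀ m : ℕ, 1 ≤ m → ∀ i : ℕ, 2 ≤ i → i ≤ I - 1 →
      -(η₁ i + ε₁) * e₁ m (i - 1) + (1 + 2 * ε₁ + γ₁) * e₁ m i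
        + (η₁ i - ε₁) * e₁ m (i + 1) = 0)
    (heq₂ : ∀ m : ℕ, 1 ≤ m → ∀ j : ℕ, 2 ≤ j → j ≤ J - 1 →
      -(η₂ j + ε₂) * e₂ m (j - 1) + (1 + 2 * ε₂ + γ₂) * e₂ m j
        + (η₂ j - ε₂) * e₂ m (j + 1) = 0)
    (hint₁ : ∀ m : ℕ,
      (e₁ (m + 1) I - e₁ (m + 1) (I - 1)) + α * e₁ (m + 1) I
        = (e₂ m 2 - e₂ m 1) + α * e₂ m 2)
    (hint₂ : ∀ m : ℕ,
      (e₂ (m + 1) 2 - e₂ (m + 1) 1) + β * e₂ (m + 1) 1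
        = (e₁ m I - e₁ m (I - 1)) + β * e₁ m (I - 1)) :
    ∀ m : ℕ, 1 ≤ m →
      (∀ i : ℕ, 1 ≤ i → i ≤ I →
        e₁ (m + 2) i
          = -(((α + 1) * (η₂ 2 + ε₂) - R₂ 2)
                * ((β - 1) * (η₁ (I - 1) - ε₁) - R₁ (I - 1)))
              / (((α + 1) * R₁ (I - 1) + (η₁ (I - 1) - ε₁))
                * ((β - 1) * R₂ 2 + (η₂ 2 + ε₂)))
              * e₁ m i) ∧
      (∀ j : ℕ, 1 ≤ j → j ≤ J →
        e₂ (m + 2) j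
          = -(((α + 1) * (η₂ 2 + ε₂) - R₂ 2)
                * ((β - 1) * (η₁ (I - 1) - ε₁) - R₁ (I - 1)))
              / (((α + 1) * R₁ (I - 1) + (η₁ (I - 1) - ε₁))
                * ((β - 1) * R₂ 2 + (η₂ 2 + ε₂)))
              * e₂ m j) := by
  intro m hm
  have hI1 : 2 ≤ I - 1 := by omega
  have hJ1 : 2 ≤ J - 1 := by omega
  -- forward elimination on grid 1
  have L1 : ∀ n, 1 ≤ n → ∀ i, 2 ≤ i → i ≤ I - 1 →
      R₁ i * e₁ n i = -(η₁ i - ε₁) * e₁ n (i + 1) := by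
    intro n hn i hi
    induction i, hi using Nat.le_induction with
    | base =>
      intro hle
      have h := heq₁ n hn 2 le_rfl hle
      rw [show (2 : ℕ) - 1 = 1 from rfl] at h
      rw [hR₁base]
      linear_combination h + (η₁ 2 + ε₁) * hb₁ n hn
    | succ i hi ih =>
      intro hle
      have hile : i ≤ I - 1 := by omega
      have hRi := hR₁ne i hi hile
      have ih' := ih hile
      have h := heq₁ n hn (i + 1) (by omega) hle
      rw [show i + 1 - 1 = i from rfl] at h
      have Hr := hR₁rec (i + 1) (by omega) hle
      rw [show i + 1 - 1 = i from rfl] at Hr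
      have Hr' : R₁ (i + 1) * R₁ i
          = (1 + 2 * ε₁ + γ₁) * R₁ i + (η₁ i - ε₁) * (η₁ (i + 1) + ε₁) := by
        rw [Hr]; field_simp
      refine mul_left_cancel₀ hRi (show R₁ i * (R₁ (i + 1) * e₁ n (i + 1))
          = R₁ i * (-(η₁ (i + 1) - ε₁) * e₁ n (i + 1 + 1)) from ?_)
      linear_combination e₁ n (i + 1) * Hr' + R₁ i * h + (η₁ (i + 1) + ε₁) * ih'
  -- backward elimination on grid 2
  have L2 : ∀ n, 1 ≤ n → ∀ j, 2 ≤ j → j ≤ J - 1 →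
      R₂ j * e₂ n j = (η₂ j + ε₂) * e₂ n (j - 1) := by
    intro n hn
    have main : ∀ d, ∀ j, j + d = J - 1 → 2 ≤ j →
        R₂ j * e₂ n j = (η₂ j + ε₂) * e₂ n (j - 1) := by
      intro d
      induction d with
      | zero =>
        intro j hjd h2
        have hj : j = J - 1 := by omega
        subst hj
        have h := heq₂ n hn (J - 1) hJ1 le_rfl
        rw [show J - 1 + 1 = J by omega, hb₂ n hn] at h
        rw [hR₂base]
        linear_combination h
      | succ d ih =>
        intro j hjd h2
        have hj2 : j ≤ J - 2 := by omega
        have ihs := ih (j + 1) (by omega) (by omega)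
        rw [show j + 1 - 1 = j from rfl] at ihs
        have hT := hR₂ne (j + 1) (by omega) (by omega)
        have h := heq₂ n hn j h2 (by omega)
        have Hr := hR₂rec j h2 hj2
        have Hr' : R₂ j * R₂ (j + 1)
            = (1 + 2 * ε₂ + γ₂) * R₂ (j + 1) + (η₂ j - ε₂) * (η₂ (j + 1) + ε₂) := by
          rw [Hr]; field_simp
        refine mul_left_cancel₀ hT (show R₂ (j + 1) * (R₂ j * e₂ n j)
            = R₂ (j + 1) * ((η₂ j + ε₂) * e₂ n (j - 1)) from ?_)
        linear_combination e₂ n j * Hr' + R₂ (j + 1) * h - (η₂ j - ε₂) * ihs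
    intro j h2 hj
    exact main (J - 1 - j) j (by omega) h2
  have hq₁ : ∀ n, 1 ≤ n →
      R₁ (I - 1) * e₁ n (I - 1) = -(η₁ (I - 1) - ε₁) * e₁ n I := by
    intro n hn
    have h := L1 n hn (I - 1) hI1 le_rfl
    rwa [show I - 1 + 1 = I by omega] at h
  have hq₂ : ∀ n, 1 ≤ n →
      R₂ 2 * e₂ n 2 = (η₂ 2 + ε₂) * e₂ n 1 := by
    intro n hn
    have h := L2 n hn 2 le_rfl hJ1
    rwa [show (2 : ℕ) - 1 = 1 from rfl] at h
  set A := R₁ (I - 1) with hA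
  set B := R₂ 2 with hB
  set p := η₁ (I - 1) - ε₁ with hp
  set q := η₂ 2 + ε₂ with hq
  have hAne : A ≠ 0 := hR₁ne (I - 1) hI1 le_rfl
  have hBne : B ≠ 0 := hR₂ne 2 le_rfl hJ1
  set ρ := -(((α + 1) * q - B) * ((β - 1) * p - A))
      / (((α + 1) * A + p) * ((β - 1) * B + q)) with hρ
  have S1 : ∀ n, 1 ≤ n →
      ((α + 1) * A + p) * B * e₁ (n + 1) I = ((α + 1) * q - B) * A * e₂ n 1 := by
    intro n hn
    linear_combination A * B * hint₁ n + B * hq₁ (n + 1) (by omega)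
      + (α + 1) * A * hq₂ n hn
  have S2 : ∀ n, 1 ≤ n →
      ((β - 1) * B + q) * A * e₂ (n + 1) 1 = (A - (β - 1) * p) * B * e₁ n I := by
    intro n hn
    linear_combination A * B * hint₂ n - A * hq₂ (n + 1) (by omega)
      + (β - 1) * B * hq₁ n hn
  have haρ : e₁ (m + 2) I = ρ * e₁ m I := by
    have h1 := S1 (m + 1) (by omega)
    rw [show m + 1 + 1 = m + 2 from rfl] at h1
    have h2 := S2 m hm
    have hcancel : (((α + 1) * A + p) * ((β - 1) * B + q)) * e₁ (m + 2) I
        = (((α + 1) * q - B) * (A - (β - 1) * p)) * e₁ m I := by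
      refine mul_left_cancel₀ hBne (show B * _ = B * _ from ?_)
      linear_combination ((β - 1) * B + q) * h1 + ((α + 1) * q - B) * h2
    rw [hρ]
    rw [div_mul_eq_mul_div, eq_div_iff (mul_ne_zero hden₁ hden₂)]
    linear_combination hcancel
  have hbρ : e₂ (m + 2) 1 = ρ * e₂ m 1 := by
    have h1 := S2 (m + 1) (by omega)
    rw [show m + 1 + 1 = m + 2 from rfl] at h1
    have h2 := S1 m hm
    have hcancel : (((α + 1) * A + p) * ((β - 1) * B + q)) * e₂ (m + 2) 1
        = (((α + 1) * q - B) * (A - (β - 1) * p)) * e₂ m 1 := by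
      refine mul_left_cancel₀ hAne (show A * _ = A * _ from ?_)
      linear_combination ((α + 1) * A + p) * h1 + (A - (β - 1) * p) * h2
    rw [hρ]
    rw [div_mul_eq_mul_div, eq_div_iff (mul_ne_zero hden₁ hden₂)]
    linear_combination hcancel
  have prop1 : ∀ d, ∀ i, i + d = I → 2 ≤ i → e₁ (m + 2) i = ρ * e₁ m i := by
    intro d
    induction d with
    | zero =>
      intro i hd h2
      have hi : i = I := by omega
      rw [hi]; exact haρ
    | succ d ih =>
      intro i hd h2
      have hi : i ≤ I - 1 := by omega
      have h1 := L1 (m + 2) (by omega) i h2 hi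
      have h0 := L1 m hm i h2 hi
      have hih := ih (i + 1) (by omega) (by omega)
      refine mul_left_cancel₀ (hR₁ne i h2 hi)
        (show R₁ i * e₁ (m + 2) i = R₁ i * (ρ * e₁ m i) from ?_)
      linear_combination h1 - ρ * h0 - (η₁ i - ε₁) * hih
  have prop2 : ∀ j, 1 ≤ j → j ≤ J - 1 → e₂ (m + 2) j = ρ * e₂ m j := by
    intro j hj
    induction j, hj using Nat.le_induction with
    | base => intro _; exact hbρ
    | succ j hj ih =>
      intro hle
      have h2j : 2 ≤ j + 1 := by omega
      have h1 := L2 (m + 2) (by omega) (j + 1) h2j hle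
      have h0 := L2 m hm (j + 1) h2j hle
      rw [show j + 1 - 1 = j from rfl] at h1 h0
      have hih := ih (by omega)
      refine mul_left_cancel₀ (hR₂ne (j + 1) h2j hle)
        (show R₂ (j + 1) * e₂ (m + 2) (j + 1) = R₂ (j + 1) * (ρ * e₂ m (j + 1)) from ?_)
      linear_combination h1 - ρ * h0 + (η₂ (j + 1) + ε₂) * hih
  constructor
  · intro i h1 hI'
    rcases eq_or_lt_of_le h1 with h | h
    · rw [← h, hb₁ (m + 2) (by omega), hb₁ m hm]; ring
    · exact prop1 (I - i) i (by omega) (by omega)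
  · intro j h1 hJ'
    by_cases hjJ : j = J
    · rw [hjJ, hb₂ (m + 2) (by omega), hb₂ m hm]; ring
    · exact prop2 j h1 (by omega)
end

section
/- Let P, S, p, q ∈ ℝ with p ≠ 0, q ≠ 0 and PS + pq ≠ 0, where in the Burgers application P = R₁(I−1), S = R₂(2), p = η₁(I−1)−ε₁ and q = η₂(2)+ε₂, and define the contraction factor ρ̄(α,β) = −[((α+1)q − S)·((β−1)p − P)] / [((α+1)P + p)·((β−1)S + q)]. Then for the optimal parameters α* = S/q − 1 and β* = P/p + 1, the denominators (α*+1)P + p and (β*−1)S + q are nonzero, ρ̄(α*,β*) = 0 (so the Schwarz iteration with these optimized interface parameters converges within two iterations), and (α*,β*) is a saddle point of ρ̄: ρ̄ attains neither a local minimum nor a local maximum at (α*,β*). -/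
/-- Value of `rhoBar` along a shift `(s, t)` from the optimal parameters. -/
lemma rhoBar_eval_shift (P S p q s t : ℝ) (hp : p ≠ 0) (hq : q ≠ 0)
    (hA : P * S + p * q + s * (P * q) ≠ 0) (hB : P * S + p * q + t * (S * p) ≠ 0) :
    rhoBar P S p q (S / q - 1 + s) (P / p + 1 + t)
      = -(s * t * (p * q) ^ 2) /
        ((P * S + p * q + s * (P * q)) * (P * S + p * q + t * (S * p))) := by
  have eA : ((S / q - 1 + s + 1) * P + p) * q = P * S + p * q + s * (P * q) := by
    field_simp; ring
  have eB : ((P / p + 1 + t - 1) * S + q) * p = P * S + p * q + t * (S * p) := by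
    field_simp; ring
  have hA' : (S / q - 1 + s + 1) * P + p ≠ 0 := by
    intro h0; apply hA; rw [← eA, h0, zero_mul]
  have hB' : (P / p + 1 + t - 1) * S + q ≠ 0 := by
    intro h0; apply hB; rw [← eB, h0, zero_mul]
  unfold rhoBar
  rw [div_eq_div_iff (mul_ne_zero hA' hB') (mul_ne_zero hA hB)]
  field_simp
  ring

/-- For the optimal parameters `α* = S/q - 1`, `β* = P/p + 1` the denominators of the
contraction factor are nonzero, the contraction factor vanishes (so the Schwarz iteration
with these optimized interface parameters converges within two iterations), and
`(α*, β*)` is a saddle point: `ρ̄` attains neither a local minimum nor a local maximum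
there. -/
theorem rhoBar_burgers_optimal_zero_saddle
    (P S p q : ℝ) (hp : p ≠ 0) (hq : q ≠ 0) (h : P * S + p * q ≠ 0) :
    (S / q - 1 + 1) * P + p ≠ 0 ∧
    (P / p + 1 - 1) * S + q ≠ 0 ∧
    rhoBar P S p q (S / q - 1) (P / p + 1) = 0 ∧
    ¬ IsLocalMin (fun z : ℝ × ℝ => rhoBar P S p q z.1 z.2) (S / q - 1, P / p + 1) ∧
    ¬ IsLocalMax (fun z : ℝ × ℝ => rhoBar P S p q z.1 z.2) (S / q - 1, P / p + 1) := by
  have hzero : rhoBar P S p q (S / q - 1) (P / p + 1) = 0 := by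
    unfold rhoBar
    have e0 : (S / q - 1 + 1) * q - S = 0 := by field_simp; ring
    rw [e0]; simp
  set K : ℝ := P * S + p * q with hKdef
  set M : ℝ := |P * q| + |S * p| + 1 with hMdef
  have hM : 0 < M := by positivity
  have hK2 : 0 < K ^ 2 := by positivity
  -- generic positivity of denominator factors
  have hfac : ∀ c t s₀ : ℝ, s₀ * |c| ≤ |K| / 2 → |t| ≤ s₀ → 0 < (K + t * c) * K := by
    intro c t s₀ hbc ht
    have h1 : t * (c * K) ≥ -(|t| * (|c| * |K|)) := by
      have hh := neg_abs_le (t * (c * K))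
      have e : |t * (c * K)| = |t| * (|c| * |K|) := by rw [abs_mul, abs_mul]
      nlinarith [hh, e]
    have h2 : |t| * (|c| * |K|) ≤ (|K| / 2) * |K| := by
      nlinarith [mul_le_mul_of_nonneg_right (mul_le_mul_of_nonneg_right ht (abs_nonneg c)) (abs_nonneg K),
        mul_le_mul_of_nonneg_right hbc (abs_nonneg K)]
    have h3 : |K| * |K| = K ^ 2 := by rw [← abs_mul, abs_mul_self]; ring
    nlinarith
  -- a convenient value of the shift bound
  have hKabs : 0 < |K| := abs_pos.mpr h
  -- main sign lemma: for any ε > 0 there are nearby points of either sign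
  have key : ∀ ε : ℝ, 0 < ε → ∀ σ : ℝ, σ = 1 ∨ σ = -1 →
      ∃ y : ℝ × ℝ, dist y ((S / q - 1, P / p + 1) : ℝ × ℝ) < ε ∧
        ((σ = 1 → rhoBar P S p q y.1 y.2 < 0) ∧ (σ = -1 → 0 < rhoBar P S p q y.1 y.2)) := by
    intro ε hε σ hσ
    set s : ℝ := min (ε / 2) (|K| / (2 * M)) with hsdef
    have hs0 : 0 < s := lt_min (by linarith) (by positivity)
    have hsM : s * M ≤ |K| / 2 := by
      have h1 : s ≤ |K| / (2 * M) := min_le_right _ _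
      calc s * M ≤ (|K| / (2 * M)) * M := by nlinarith
      _ = |K| / 2 := by field_simp
    have hbP : s * |P * q| ≤ |K| / 2 := by
      have : |P * q| ≤ M := by rw [hMdef]; nlinarith [abs_nonneg (S * p)]
      nlinarith
    have hbS : s * |S * p| ≤ |K| / 2 := by
      have : |S * p| ≤ M := by rw [hMdef]; nlinarith [abs_nonneg (P * q)]
      nlinarith
    set t : ℝ := σ * s with htdef
    have hts : |t| ≤ s := by
      rcases hσ with h1 | h1 <;> rw [htdef, h1] <;>
        simp [abs_of_pos hs0, abs_of_nonneg hs0.le]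
    have hss : |s| ≤ s := by rw [abs_of_pos hs0]
    have h1 : 0 < (K + s * (P * q)) * K := hfac (P * q) s s hbP hss
    have h2 : 0 < (K + t * (S * p)) * K := hfac (S * p) t s hbS hts
    have hA : K + s * (P * q) ≠ 0 := by intro h0; rw [h0, zero_mul] at h1; exact lt_irrefl _ h1
    have hB : K + t * (S * p) ≠ 0 := by intro h0; rw [h0, zero_mul] at h2; exact lt_irrefl _ h2
    have hD : 0 < (K + s * (P * q)) * (K + t * (S * p)) := by
      nlinarith [mul_pos h1 h2]
    have hval := rhoBar_eval_shift P S p q s t hp hq hA hB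
    refine ⟨(S / q - 1 + s, P / p + 1 + t), ?_, ?_, ?_⟩
    · have hd : dist ((S / q - 1 + s, P / p + 1 + t) : ℝ × ℝ) (S / q - 1, P / p + 1)
          = max |s| |t| := by
        rw [Prod.dist_eq, Real.dist_eq, Real.dist_eq]
        congr 1 <;> · congr 1; ring
      rw [hd]
      have : max |s| |t| ≤ s := max_le hss hts
      have hsε : s ≤ ε / 2 := min_le_left _ _
      linarith
    · intro hσ1
      have hst : t = s := by rw [htdef, hσ1, one_mul]
      rw [hval]
      apply div_neg_of_neg_of_pos
      · have : 0 < s * t * (p * q) ^ 2 := by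
          rw [hst]; positivity
        linarith
      · rw [← hKdef]; exact hD
    · intro hσ1
      have hst : t = -s := by rw [htdef, hσ1]; ring
      rw [hval]
      apply div_pos
      · have e : -(s * t * (p * q) ^ 2) = (s * (p * q)) ^ 2 := by rw [hst]; ring
        rw [e]; positivity
      · rw [← hKdef]; exact hD
  refine ⟨?_, ?_, hzero, ?_, ?_⟩
  · intro h0
    apply h
    have e : ((S / q - 1 + 1) * P + p) * q = P * S + p * q := by field_simp; ring
    rw [h0, zero_mul] at e
    exact e.symm
  · intro h0
    apply h
    have e : ((P / p + 1 - 1) * S + q) * p = P * S + p * q := by field_simp; ring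
    rw [h0, zero_mul] at e
    exact e.symm
  · intro hmin
    obtain ⟨ε, hε, hball⟩ := Metric.eventually_nhds_iff.mp hmin
    obtain ⟨y, hy, hneg, -⟩ := key ε hε 1 (Or.inl rfl)
    have := hball hy
    simp only [hzero] at this
    exact absurd this (not_le.mpr (hneg rfl))
  · intro hmax
    obtain ⟨ε, hε, hball⟩ := Metric.eventually_nhds_iff.mp hmax
    obtain ⟨y, hy, -, hpos⟩ := key ε hε (-1) (Or.inr rfl)
    have := hball hy
    simp only [hzero] at this
    exact absurd this (not_le.mpr (hpos rfl))
end
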